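/- Let a locally compact abelian group G act via α on a set X carrying a G-invariant uniformity 𝒰. If both 𝒰 and the topology of G are metrizable, and (X, 𝒰) is complete, then (X, 𝒰_mix) is complete, where 𝒰_mix is the mixed uniformity. -/

import Mathlib

open Uniformity
open Pointwise

/-- The basic mixed entourage `V[O,U] = {(α t x, y) : t ∈ O, (x,y) ∈ U}`. -/
def mixEnt {G X : Type*} (α : G → X → X) (O : Set G) (U : Set (X × X)) : Set (X × X) :=
  {p : X × X | ∃ t ∈ O, ∃ q ∈ U, p.1 = α t q.1 ∧ p.2 = q.2}

/-- The mixed uniformity `𝒰_mix`: all supersets of some `V[O,U]` with `U ∈ 𝒰` and `O` an open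
set containing `0`. -/
def mixUniformity {G X : Type*} [AddCommGroup G] [TopologicalSpace G] [UniformSpace X]
    (α : G → X → X) : Set (Set (X × X)) :=
  {V : Set (X × X) | ∃ U ∈ 𝓤 X, ∃ O : Set G, IsOpen O ∧ (0 : G) ∈ O ∧ mixEnt α O U ⊆ V}

/-- If both `𝒰` and the topology of `G` are metrizable and `(X, 𝒰)` is
complete, then `(X, 𝒰_mix)` is complete: every filter on `X` which is Cauchy with respect to
`𝒰_mix` converges, in the topology induced by `𝒰_mix`, to some point of `X`. -/
theorem stmt13 {G X : Type*}
    [AddCommGroup G] [TopologicalSpace G] [IsTopologicalAddGroup G]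
    [LocallyCompactSpace G] [T2Space G] [TopologicalSpace.MetrizableSpace G]
    [UniformSpace X] [CompleteSpace X]
    (α : G → X → X)
    (hzero : ∀ x, α 0 x = x)
    (hadd : ∀ s t x, α s (α t x) = α (s + t) x)
    (hinv : ∀ U ∈ 𝓤 X, ∃ U' ∈ 𝓤 X, ∀ (t : G), ∀ p : X × X, p ∈ U' →
      (α t p.1, α t p.2) ∈ U)
    -- `𝒰` has a countable basis of entourages (metrizability of `𝒰`)
    (hbasis : ∃ B : Set (Set (X × X)), B.Countable ∧ (∀ W ∈ B, W ∈ 𝓤 X) ∧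
      ∀ U ∈ 𝓤 X, ∃ W ∈ B, W ⊆ U) :
    ∀ F : Filter X, F.NeBot →
      -- `F` is Cauchy with respect to `𝒰_mix`
      (∀ V ∈ mixUniformity α, ∃ A ∈ F, A ×ˢ A ⊆ V) →
      -- `F` converges in the `𝒰_mix`-topology
      ∃ x : X, ∀ V ∈ mixUniformity α, {y : X | (x, y) ∈ V} ∈ F := by
  intro F hF hCauchy
  classical
  -- action helper lemmas
  have hcancel : ∀ (t : G) (z : X), α (-t) (α t z) = z := by
    intro t z; rw [hadd, neg_add_cancel, hzero]
  have hcancel' : ∀ (t : G) (z : X), α t (α (-t) z) = z := by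
    intro t z; rw [hadd, add_neg_cancel, hzero]
  -- countable decreasing basis `C` of `𝓤 X`
  obtain ⟨B, hBc, hBU, hBb⟩ := hbasis
  have hBne : B.Nonempty := by
    obtain ⟨Wb, hWb, -⟩ := hBb Set.univ Filter.univ_mem
    exact ⟨Wb, hWb⟩
  obtain ⟨f, hfB⟩ := hBc.exists_eq_range hBne
  have hfU : ∀ k, f k ∈ 𝓤 X := fun k => hBU _ (hfB ▸ Set.mem_range_self k)
  set C : ℕ → Set (X × X) := fun n => ⋂ k ∈ Set.Iic n, f k with hCdef
  have hCU : ∀ n, C n ∈ 𝓤 X := fun n =>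
    (Filter.biInter_mem (Set.finite_Iic n)).2 fun k _ => hfU k
  have hCanti : ∀ {m n : ℕ}, m ≤ n → C n ⊆ C m := by
    intro m n hmn
    exact Set.biInter_subset_biInter_left (Set.Iic_subset_Iic.2 hmn)
  have hCb : ∀ U ∈ 𝓤 X, ∃ n, C n ⊆ U := by
    intro U hU
    obtain ⟨Wb, hWbB, hWbU⟩ := hBb U hU
    rw [hfB] at hWbB
    obtain ⟨k, rfl⟩ := hWbB
    exact ⟨k, (Set.biInter_subset_of_mem (Set.mem_Iic.2 le_rfl)).trans hWbU⟩
  -- chain of symmetric entourages `W`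
  have hWstep : ∀ (n : ℕ) (V : Set (X × X)),
      ∃ W', W' ∈ 𝓤 X ∧ SetRel.IsSymm W' ∧ W' ⊆ C n ∧ (V ∈ 𝓤 X → SetRel.comp W' W' ⊆ V) := by
    intro n V
    by_cases hV : V ∈ 𝓤 X
    · obtain ⟨V', hV', hV'c⟩ := comp_mem_uniformity_sets hV
      refine ⟨SetRel.symmetrize V' ∩ SetRel.symmetrize (C n),
        Filter.inter_mem (symmetrize_mem_uniformity hV') (symmetrize_mem_uniformity (hCU n)),
        inferInstance, ?_, fun _ => ?_⟩
      · exact Set.inter_subset_right.trans (SetRel.symmetrize_subset_self (R := C n))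
      · exact (SetRel.comp_subset_comp (Set.inter_subset_left.trans (SetRel.symmetrize_subset_self (R := V')))
          (Set.inter_subset_left.trans (SetRel.symmetrize_subset_self (R := V')))).trans hV'c
    · exact ⟨SetRel.symmetrize (C n), symmetrize_mem_uniformity (hCU n),
        inferInstance, SetRel.symmetrize_subset_self, fun h => absurd h hV⟩
  choose Wf hWf1 hWf2 hWf4 hWf3 using hWstep
  set W : ℕ → Set (X × X) := fun n =>
    Nat.rec (SetRel.symmetrize (C 0)) (fun m Wm => Wf (m + 1) Wm) n with hWdef
  have hWU : ∀ n, W n ∈ 𝓤 X := by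
    intro n; induction n with
    | zero => exact symmetrize_mem_uniformity (hCU 0)
    | succ m ih => exact hWf1 (m + 1) (W m)
  have hWsymm : ∀ n, SetRel.IsSymm (W n) := by
    intro n; cases n with
    | zero => exact inferInstance
    | succ m => exact hWf2 (m + 1) (W m)
  have hWcomp : ∀ n, SetRel.comp (W (n + 1)) (W (n + 1)) ⊆ W n :=
    fun n => hWf3 (n + 1) (W n) (hWU n)
  have hWC : ∀ n, W n ⊆ C n := by
    intro n; cases n with
    | zero => exact SetRel.symmetrize_subset_self (R := C 0)
    | succ m => exact hWf4 (m + 1) (W m)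
  have hWmono : ∀ n, W (n + 1) ⊆ W n := by
    intro n q hq
    rcases q with ⟨a, b⟩
    exact hWcomp n ⟨b, hq, refl_mem_uniformity (hWU (n + 1))⟩
  have hWanti : Antitone W := antitone_nat_of_succ_le hWmono
  -- neighborhood data on `G`
  obtain ⟨K, hKc, hKn⟩ := exists_compact_mem_nhds (0 : G)
  obtain ⟨N, hN⟩ := (nhds (0 : G)).exists_antitone_basis
  have hNmem : ∀ n, N n ∈ nhds (0 : G) := fun n => hN.1.mem_of_mem trivial
  have hclos : ∀ Wg : Set G, IsOpen Wg → (0 : G) ∈ Wg → (∀ g ∈ Wg, -g ∈ Wg) →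
      closure Wg ⊆ Wg + Wg := by
    intro Wg hWo hW0 hWs z hz
    have hc : ContinuousAt (fun y : G => y - z) z := by fun_prop
    have hnb : (fun y : G => y - z) ⁻¹' Wg ∈ nhds z := by
      apply hc.preimage_mem_nhds
      simpa using hWo.mem_nhds hW0
    obtain ⟨u, hu1, hu2⟩ := mem_closure_iff_nhds.mp hz _ hnb
    have hb : z - u ∈ Wg := by
      have := hWs _ hu1
      simpa [neg_sub] using this
    rw [show z = u + (z - u) by abel]
    exact Set.add_mem_add hu2 hb
  have hOstep : ∀ V ∈ nhds (0 : G), ∃ Wg : Set G,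
      IsOpen Wg ∧ (0 : G) ∈ Wg ∧ (∀ g ∈ Wg, -g ∈ Wg) ∧ Wg + Wg ⊆ V := by
    intro V hV
    obtain ⟨V', hV', hV'add⟩ := exists_nhds_zero_half hV
    have h0i : (0 : G) ∈ interior V' := mem_interior_iff_mem_nhds.2 hV'
    refine ⟨interior V' ∩ -interior V', isOpen_interior.inter isOpen_interior.neg,
      ⟨h0i, by simpa using h0i⟩, ?_, ?_⟩
    · rintro g ⟨hg1, hg2⟩
      exact ⟨Set.mem_neg.mp hg2, Set.mem_neg.mpr (by simpa using hg1)⟩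
    · rintro v hv
      rw [Set.mem_add] at hv
      obtain ⟨a, ha, b, hb, rfl⟩ := hv
      exact hV'add a (interior_subset ha.1) b (interior_subset hb.1)
  obtain ⟨S0, hS0o, hS00, hS0s, hS0add⟩ :=
    hOstep (interior K ∩ N 0) (Filter.inter_mem (interior_mem_nhds.2 hKn) (hNmem 0))
  have hstep' : ∀ (n : ℕ) (S : {S : Set G // IsOpen S ∧ (0 : G) ∈ S ∧ ∀ g ∈ S, -g ∈ S}),
      ∃ S' : {S : Set G // IsOpen S ∧ (0 : G) ∈ S ∧ ∀ g ∈ S, -g ∈ S},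
        S'.1 + S'.1 ⊆ S.1 ∩ N n := by
    intro n S
    obtain ⟨S', h1, h2, h3, h4⟩ := hOstep (S.1 ∩ N n)
      (Filter.inter_mem (S.2.1.mem_nhds S.2.2.1) (hNmem n))
    exact ⟨⟨S', h1, h2, h3⟩, h4⟩
  choose stp hstp using hstep'
  set O' : ℕ → {S : Set G // IsOpen S ∧ (0 : G) ∈ S ∧ ∀ g ∈ S, -g ∈ S} := fun n =>
    Nat.rec ⟨S0, hS0o, hS00, hS0s⟩ (fun m Om => stp (m + 1) Om) n with hO'def
  set O : ℕ → Set G := fun n => (O' n).1 with hOdef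
  have hOopen : ∀ n, IsOpen (O n) := fun n => (O' n).2.1
  have hO0 : ∀ n, (0 : G) ∈ O n := fun n => (O' n).2.2.1
  have hOsymm : ∀ n, ∀ g ∈ O n, -g ∈ O n := fun n => (O' n).2.2.2
  have hOadd : ∀ n, O (n + 1) + O (n + 1) ⊆ O n :=
    fun n => (hstp (n + 1) (O' n)).trans Set.inter_subset_left
  have hON : ∀ n, O n ⊆ N n := by
    intro n g hg
    cases n with
    | zero =>
      have h2 := hS0add (Set.add_mem_add hg (hO0 0))
      rw [add_zero] at h2
      exact h2.2
    | succ m =>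
      have h2 := hstp (m + 1) (O' m) (Set.add_mem_add hg (hO0 (m + 1)))
      rw [add_zero] at h2
      exact h2.2
  have hOK : O 0 + O 0 ⊆ K := hS0add.trans (Set.inter_subset_left.trans interior_subset)
  have hOmono : ∀ n, O (n + 1) ⊆ O n := by
    intro n g hg
    have := hOadd n (Set.add_mem_add hg (hO0 (n + 1)))
    rwa [add_zero] at this
  have hOanti : Antitone O := antitone_nat_of_succ_le hOmono
  -- shifted entourages and the Cauchy data from `F`
  choose D hDU hDshift using fun n => hinv (W n) (hWU n)
  set U : ℕ → Set (X × X) := fun n => D (n + 1) ∩ C n with hUdef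
  have hUU : ∀ n, U n ∈ 𝓤 X := fun n => Filter.inter_mem (hDU (n + 1)) (hCU n)
  have hmixmem : ∀ n, mixEnt α (O n) (U n) ∈ mixUniformity α :=
    fun n => ⟨U n, hUU n, O n, hOopen n, hO0 n, subset_rfl⟩
  choose A' hA'F hA'sub using fun n => hCauchy _ (hmixmem n)
  set A : ℕ → Set X := fun n => ⋂ k ∈ Set.Iic n, A' k with hAdef
  have hAF : ∀ n, A n ∈ F := fun n =>
    (Filter.biInter_mem (Set.finite_Iic n)).2 fun k _ => hA'F k
  have hAsub : ∀ {k n : ℕ}, k ≤ n → A n ⊆ A' k := fun hk =>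
    Set.biInter_subset_of_mem (Set.mem_Iic.2 hk)
  have hAne : ∀ n, (A n).Nonempty := fun n => F.nonempty_of_mem (hAF n)
  choose x hx using hAne
  have hpair' : ∀ n, ∃ t ∈ O n, (α (-t) (x n), x (n + 1)) ∈ U n := by
    intro n
    have h : (x n, x (n + 1)) ∈ mixEnt α (O n) (U n) :=
      hA'sub n (Set.mk_mem_prod (hAsub le_rfl (hx n)) (hAsub (Nat.le_succ n) (hx (n + 1))))
    obtain ⟨t, htO, q, hqU, h1, h2⟩ := h
    refine ⟨t, htO, ?_⟩
    have hq1 : α (-t) (x n) = q.1 := by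
      change x n = α t q.1 at h1
      rw [h1, hcancel]
    change x (n + 1) = q.2 at h2
    rw [hq1, h2]
    simpa using hqU
  choose t htO htU using hpair'
  set p : ℕ → G := fun n => ∑ k ∈ Finset.range n, t k with hpdef
  have hp0 : p 0 = 0 := Finset.sum_range_zero _
  have hpsucc : ∀ n, p (n + 1) = p n + t n := fun n => Finset.sum_range_succ _ _
  set w : ℕ → X := fun n => α (p n) (x n) with hwdef
  -- `w` is a Cauchy sequence
  have hwstep : ∀ n, (w n, w (n + 1)) ∈ W (n + 1) := by
    intro n
    have h2 := hDshift (n + 1) (p n + t n) _ (htU n).1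
    have e1 : α (p n + t n) (α (-(t n)) (x n)) = w n := by
      rw [hadd, show p n + t n + -(t n) = p n by abel]
    have e2 : α (p n + t n) (x (n + 1)) = w (n + 1) := by
      rw [show w (n + 1) = α (p (n + 1)) (x (n + 1)) from rfl, hpsucc]
    rwa [e1, e2] at h2
  have hchain : ∀ k n, (w n, w (n + k)) ∈ W n := by
    intro k
    induction k with
    | zero => exact fun n => refl_mem_uniformity (hWU n)
    | succ m ih =>
      intro n
      have h3 : (w n, w (n + 1 + m)) ∈ SetRel.comp (W (n + 1)) (W (n + 1)) :=
        ⟨w (n + 1), hwstep n, ih (n + 1)⟩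
      have h4 := hWcomp n h3
      rwa [show n + 1 + m = n + (m + 1) by omega] at h4
  have hwC : CauchySeq w := by
    rw [cauchySeq_iff]
    intro V hV
    obtain ⟨n₀, hn₀⟩ := hCb (SetRel.symmetrize V) (symmetrize_mem_uniformity hV)
    refine ⟨n₀, fun k hk l hl => ?_⟩
    rcases le_total k l with h | h
    · obtain ⟨d, rfl⟩ := Nat.exists_eq_add_of_le h
      exact SetRel.symmetrize_subset_self (R := V) (hn₀ (hWC n₀ (hWanti hk (hchain d k))))
    · obtain ⟨d, rfl⟩ := Nat.exists_eq_add_of_le h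
      exact SetRel.symmetrize_subset_self (R := V) (((SetRel.symmetrize V).comm).mp
        (hn₀ (hWC n₀ (hWanti hl (hchain d l)))))
  obtain ⟨xLim, hxLim⟩ := cauchySeq_tendsto_of_complete hwC
  -- partial sums of the `t`'s stay in a compact set
  have hsum : ∀ d n, p (n + d + 1) - p n ∈ O n + O n := by
    intro d
    induction d with
    | zero =>
      intro n
      have h : p (n + 0 + 1) - p n = t n := by
        rw [show n + 0 + 1 = n + 1 from rfl, hpsucc]; abel
      rw [h, show t n = t n + 0 by rw [add_zero]]
      exact Set.add_mem_add (htO n) (hO0 n)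
    | succ m ih =>
      intro n
      have h2 : p (n + 1 + m + 1) - p (n + 1) ∈ O n := hOadd n (ih (n + 1))
      have h3 : p (n + (m + 1) + 1) - p n = t n + (p (n + 1 + m + 1) - p (n + 1)) := by
        rw [show n + (m + 1) + 1 = n + 1 + m + 1 by omega, hpsucc n]; abel
      rw [h3]
      exact Set.add_mem_add (htO n) h2
  have hpK : ∀ n, p n ∈ K := by
    intro n
    cases n with
    | zero => rw [hp0]; exact mem_of_mem_nhds hKn
    | succ m =>
      have h := hsum m 0
      rw [hp0, sub_zero, show 0 + m + 1 = m + 1 by omega] at h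
      exact hOK h
  obtain ⟨r, hrK, φ, hφ, hφlim⟩ := hKc.tendsto_subseq hpK
  have hr : ∀ n, r - p (n + 2) ∈ O n := by
    intro n
    have hcl : r - p (n + 2) ∈ closure (O (n + 1)) := by
      apply mem_closure_of_tendsto (hφlim.sub_const (p (n + 2)))
      rw [Filter.eventually_atTop]
      refine ⟨n + 3, fun j hj => ?_⟩
      have hjφ : n + 3 ≤ φ j := le_trans hj hφ.le_apply
      have hidx : φ j = (n + 2) + (φ j - (n + 3)) + 1 := by omega
      rw [Function.comp_apply, hidx]
      exact hOadd (n + 1) (hsum (φ j - (n + 3)) (n + 2))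
    exact hOadd n (hclos _ (hOopen (n + 1)) (hO0 (n + 1)) (hOsymm (n + 1)) hcl)
  -- the limit
  refine ⟨α (-r) xLim, ?_⟩
  intro V hV
  obtain ⟨U0, hU0, Oo, hOo, hOo0, hsubV⟩ := hV
  obtain ⟨U'', hU''U, hU''c⟩ := comp_mem_uniformity_sets hU0
  obtain ⟨Dd, hDdU, hDdshift⟩ := hinv U'' hU''U
  obtain ⟨m₁, hm₁⟩ := hCb U'' hU''U
  obtain ⟨m₂, -, hm₂⟩ := hN.1.mem_iff.mp (hOo.mem_nhds hOo0)
  have hwD : ∀ᶠ n in Filter.atTop, w n ∈ UniformSpace.ball xLim Dd :=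
    hxLim.eventually (UniformSpace.ball_mem_nhds xLim hDdU)
  obtain ⟨m₄, hm₄⟩ := Filter.eventually_atTop.mp hwD
  set M : ℕ := max m₂ (max m₁ m₄) with hMdef
  set n : ℕ := M + 3 with hndef
  refine F.mem_of_superset (hAF n) ?_
  intro y hy
  have hxy : (x n, y) ∈ mixEnt α (O n) (U n) :=
    hA'sub n (Set.mk_mem_prod (hAsub le_rfl (hx n)) (hAsub le_rfl hy))
  obtain ⟨t', ht'O, q, hqU, h1, h2⟩ := hxy
  have hq1 : α (-t') (x n) = q.1 := by
    change x n = α t' q.1 at h1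
    rw [h1, hcancel]
  change y = q.2 at h2
  have hU''2 : (α (-t') (x n), y) ∈ U'' := by
    have hC : (α (-t') (x n), y) ∈ C n := by
      rw [hq1, h2]
      have := hqU.2
      simpa using this
    exact hm₁ (hCanti (by omega : m₁ ≤ n) hC)
  -- the shift `s`
  set s : G := t' - (r - p n) with hsdef
  have hsO : s ∈ Oo := by
    have h1' : t' ∈ O (M + 1) := hOanti (by omega : M + 1 ≤ n) ht'O
    have h2' : -(r - p n) ∈ O (M + 1) := by
      refine hOsymm (M + 1) _ ?_
      have := hr (M + 1)
      rwa [show M + 1 + 2 = n by omega] at this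
    have h3' : s ∈ O (M + 1) + O (M + 1) := by
      rw [hsdef, sub_eq_add_neg]
      exact Set.add_mem_add h1' h2'
    have h4' : s ∈ O M := hOadd M h3'
    exact hm₂ (hN.antitone (le_max_left _ _) (hON M h4'))
  have hU''1 : (α (-s) (α (-r) xLim), α (-t') (x n)) ∈ U'' := by
    have hD : (xLim, w n) ∈ Dd := hm₄ n (by omega)
    have h5 := hDdshift (-t' - p n) _ hD
    have e1 : α (-t' - p n) xLim = α (-s) (α (-r) xLim) := by
      rw [hadd, show -s + -r = -t' - p n by rw [hsdef]; abel]
    have e2 : α (-t' - p n) (w n) = α (-t') (x n) := by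
      rw [show w n = α (p n) (x n) from rfl, hadd,
        show -t' - p n + p n = -t' by abel]
    rwa [e1, e2] at h5
  have hmem : (α (-s) (α (-r) xLim), y) ∈ U0 :=
    hU''c ⟨α (-t') (x n), hU''1, hU''2⟩
  apply hsubV
  exact ⟨s, hsO, (α (-s) (α (-r) xLim), y), hmem, (hcancel' s _).symm, rfl⟩
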